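/- Let n ≥ 2 and let P be a p-subgroup of the symmetric group S_n having exactly a_0 orbits of size 1 on {1,…,n}. If a_0 = 0, then dim_F Y^{(n−1,1)}(P) = 0. If a_0 ≥ 1, then dim_F Y^{(n−1,1)}(P) = a_0 if p divides n, and dim_F Y^{(n−1,1)}(P) = a_0 − 1 if p does not divide n. -/

import Mathlib

open scoped BigOperators

/-! ## Brauer construction for representations of finite groups -/

section Brauer

variable {F : Type} [Field F] {G : Type} [Group G]
variable {V : Type} [AddCommGroup V] [Module F V]

/-- The submodule of `P`-fixed points of a representation. -/
def repFixed (ρ : Representation F G V) (P : Subgroup G) : Submodule F V where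
  carrier := {v | ∀ g ∈ P, ρ g v = v}
  add_mem' := by
    intro a b ha hb g hg
    simp [map_add, ha g hg, hb g hg]
  zero_mem' := by
    intro g hg
    simp
  smul_mem' := by
    intro c v hv g hg
    simp [map_smul, hv g hg]

/-- The relative trace map `Tr_Q^P` (as a bare function, summing over a set of
left coset representatives of `Q` in `P`). -/
noncomputable def relTrace [Finite G] (ρ : Representation F G V) (P Q : Subgroup G)
    (v : V) : V := by
  classical
  have : Fintype (P ⧸ Q.subgroupOf P) := Fintype.ofFinite _
  exact ∑ x : P ⧸ Q.subgroupOf P, ρ ((Quotient.out x : ↥P) : G) v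

/-- The subspace `Tr^P(M) = Σ_{Q < P} Tr_Q^P (M^Q)` (as a submodule of `V`). -/
noncomputable def brauerTraceSub [Finite G] (ρ : Representation F G V) (P : Subgroup G) :
    Submodule F V :=
  Submodule.span F {w | ∃ Q : Subgroup G, Q < P ∧ ∃ v ∈ repFixed ρ Q, w = relTrace ρ P Q v}

/-- The dimension of the Brauer construction `M(P) = M^P / Tr^P(M)`. -/
noncomputable def brauerDim [Finite G] (ρ : Representation F G V) (P : Subgroup G) : ℕ :=
  Module.finrank F
    (↥(repFixed ρ P) ⧸ ((brauerTraceSub ρ P).comap (repFixed ρ P).subtype))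

/-- `σ` is (isomorphic to) a direct summand of `ρ`: there is an equivariant split
injection of `σ` into `ρ`. -/
def IsRepSummand {W : Type} [AddCommGroup W] [Module F W]
    (ρ : Representation F G V) (σ : Representation F G W) : Prop :=
  ∃ (ι : W →ₗ[F] V) (π : V →ₗ[F] W),
    (∀ g w, ι (σ g w) = ρ g (ι w)) ∧ (∀ g v, π (ρ g v) = σ g (π v)) ∧ ∀ w, π (ι w) = w

/-- A representation is indecomposable: nonzero, and admitting no nontrivial
decomposition into two invariant submodules. -/
def IsIndecomposableRep (ρ : Representation F G V) : Prop :=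
  (∃ v : V, v ≠ 0) ∧
  ∀ A B : Submodule F V, (∀ g, ∀ v ∈ A, ρ g v ∈ A) → (∀ g, ∀ v ∈ B, ρ g v ∈ B) →
    A ⊓ B = ⊥ → A ⊔ B = ⊤ → A = ⊥ ∨ B = ⊥

/-- Isomorphism of representations. -/
def RepIso {W : Type} [AddCommGroup W] [Module F W]
    (ρ : Representation F G V) (σ : Representation F G W) : Prop :=
  ∃ e : V ≃ₗ[F] W, ∀ g v, e (ρ g v) = σ g (e v)

end Brauer

/-! ## Compositions, partitions, tabloids and Young modules -/

section Young

/-- A composition of `n` as a finitely supported function `ℕ → ℕ` with sum `n`. -/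
def IsCompositionFn (c : ℕ → ℕ) (n : ℕ) : Prop :=
  (Function.support c).Finite ∧ ∑ᶠ j, c j = n

/-- A partition of `n` as a finitely supported weakly decreasing function `ℕ → ℕ`
with sum `n`. -/
def IsPartitionFn (c : ℕ → ℕ) (n : ℕ) : Prop :=
  IsCompositionFn c n ∧ Antitone c

/-- A `p`-restricted partition: all successive differences (including the last
part) are `< p`. -/
def IsPRestrictedFn (p : ℕ) (c : ℕ → ℕ) : Prop := ∀ j, c j - c (j + 1) < p

/-- The dominance order: `Dominates lam mu` means `lam ⊵ mu`. -/
def Dominates (lam mu : ℕ → ℕ) : Prop :=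
  ∀ N, ∑ j ∈ Finset.range N, mu j ≤ ∑ j ∈ Finset.range N, lam j

/-- Strict dominance `lam ⊳ mu`. -/
def StrictDominates (lam mu : ℕ → ℕ) : Prop := Dominates lam mu ∧ lam ≠ mu

/-- A `c`-tabloid: a tuple of pairwise disjoint subsets of `{1,…,n}` covering
everything, the `j`-th of size `c j`. -/
structure Tabloid (n : ℕ) (c : ℕ → ℕ) where
  row : ℕ → Finset (Fin n)
  disj : ∀ i j, i ≠ j → Disjoint (row i) (row j)
  card_row : ∀ j, (row j).card = c j
  cover : ∀ x, ∃ j, x ∈ row j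

theorem Tabloid.ext' {n : ℕ} {c : ℕ → ℕ} {T S : Tabloid n c} (h : T.row = S.row) :
    T = S := by
  cases T; cases S; simp_all

/-- The natural action of the symmetric group on tabloids. -/
instance {n : ℕ} {c : ℕ → ℕ} : MulAction (Equiv.Perm (Fin n)) (Tabloid n c) where
  smul σ T :=
    { row := fun j => (T.row j).image σ
      disj := fun i j h => (Finset.disjoint_image σ.injective).mpr (T.disj i j h)
      card_row := fun j => by
        rw [Finset.card_image_of_injective _ σ.injective, T.card_row]
      cover := fun x => by
        obtain ⟨j, hj⟩ := T.cover (σ⁻¹ x)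
        exact ⟨j, Finset.mem_image.mpr ⟨σ⁻¹ x, hj, by simp⟩⟩ }
  one_smul T := Tabloid.ext' (by funext j; exact Finset.image_id)
  mul_smul a b T := Tabloid.ext' (by
    funext j
    show Finset.image (⇑(a * b)) _ = Finset.image ⇑a (Finset.image ⇑b _)
    rw [Finset.image_image]
    rfl)

/-- The Young permutation module `M^c`, as the permutation representation of
`S_n` on the free `F`-module on the set of `c`-tabloids. -/
noncomputable def youngRep (F : Type) [Field F] (n : ℕ) (c : ℕ → ℕ) :
    Representation F (Equiv.Perm (Fin n)) (Tabloid n c →₀ F) :=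
  { toFun := fun g => Finsupp.lmapDomain F F (g • ·)
    map_one' := by ext x y; simp
    map_mul' := fun x y => by ext z w; simp [mul_smul] }

/-- `ρ` is a Young module `Y^lam`: an indecomposable direct summand of `M^lam`
which is not a direct summand of any `M^mu` with `mu ⊳ lam`. -/
def IsYoungModuleFor (F : Type) [Field F] (n : ℕ) (lam : ℕ → ℕ)
    {V : Type} [AddCommGroup V] [Module F V]
    (ρ : Representation F (Equiv.Perm (Fin n)) V) : Prop :=
  IsIndecomposableRep ρ ∧ IsRepSummand (youngRep F n lam) ρ ∧
  ∀ mu : ℕ → ℕ, IsPartitionFn mu n → StrictDominates mu lam →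
    ¬ IsRepSummand (youngRep F n mu) ρ

end Young

/-! ## Orbit types, Young subgroups and related combinatorics -/

section Orbits

/-- The orbit type of a subgroup `P ≤ S_n`: the multiset of cardinalities of
the orbits of `P` on `{1,…,n}`. -/
noncomputable def orbitType (n : ℕ) (P : Subgroup (Equiv.Perm (Fin n))) : Multiset ℕ := by
  classical
  exact (Finset.univ.image fun x : Fin n => MulAction.orbit P x).val.map fun s => s.ncard

/-- The multiset of (nonempty) fiber sizes of a labelling `f : {1,…,n} → ℕ`;
the fibers of `f` are the blocks of a set partition of `{1,…,n}`. -/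
noncomputable def fiberSizes {n : ℕ} (f : Fin n → ℕ) : Multiset ℕ := by
  classical
  exact (Finset.univ.image f).val.map fun j => (Finset.univ.filter fun x => f x = j).card

/-- The subgroup of permutations preserving each fiber (block) of the
labelling `f`; for an interval labelling this is a Young subgroup. -/
def blockStabilizer (n : ℕ) (f : Fin n → ℕ) : Subgroup (Equiv.Perm (Fin n)) where
  carrier := {σ | ∀ x, f (σ x) = f x}
  one_mem' := fun _ => rfl
  mul_mem' := by
    intro a b ha hb x
    rw [Equiv.Perm.mul_apply, ha, hb]
  inv_mem' := by
    intro a ha x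
    simpa using (ha (a⁻¹ x)).symm

/-- `P` is a Sylow `p`-subgroup of the subgroup `H`. -/
def IsSylowPSubgroupIn {G : Type} [Group G] (p : ℕ) (P H : Subgroup G) : Prop :=
  P ≤ H ∧ IsPGroup p P ∧ ∀ Q : Subgroup G, IsPGroup p Q → Q ≤ H → P ≤ Q → Q = P

/-- Every member of `O` is a power of `p`. -/
def IsPPowerMultiset (p : ℕ) (O : Multiset ℕ) : Prop := ∀ x ∈ O, ∃ i : ℕ, x = p ^ i

/-- `lamE 0, …, lamE s` is the `p`-adic expansion of the partition `lam`:
each `lamE i` is a `p`-restricted partition and `lam = Σ_i p^i • lamE i`. -/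
def IsPAdicExpansionOf (p : ℕ) (lam : ℕ → ℕ) (s : ℕ) (lamE : ℕ → ℕ → ℕ) : Prop :=
  (∀ i, i ≤ s →
    (Function.support (lamE i)).Finite ∧ Antitone (lamE i) ∧ IsPRestrictedFn p (lamE i)) ∧
  ∀ j, lam j = ∑ i ∈ Finset.range (s + 1), p ^ i * lamE i j

/-- The multiset `O_lam = (1^{|lam(0)|}, p^{|lam(1)|}, …, (p^s)^{|lam(s)|})`
attached to a `p`-adic expansion. -/
noncomputable def pAdicOrbitMultiset (p s : ℕ) (lamE : ℕ → ℕ → ℕ) : Multiset ℕ :=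
  ∑ i ∈ Finset.range (s + 1), Multiset.replicate (∑ᶠ j, lamE i j) (p ^ i)

/-- `O` is a rearrangement of a refinement of `O'`: `O` is a disjoint union of
submultisets, one summing to each element of `O'`. -/
def IsRefinementRearrangement (O O' : Multiset ℕ) : Prop :=
  ∃ C : Multiset (Multiset ℕ), C.map Multiset.sum = O' ∧ C.sum = O

/-- `P` is conjugate to a subgroup of `Q`. -/
def IsConjSubgroup {G : Type} [Group G] (P Q : Subgroup G) : Prop :=
  ∃ g : G, ∀ x ∈ P, g * x * g⁻¹ ∈ Q

/-- An elementary abelian `p`-subgroup. -/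
def IsElementaryAbelian (p : ℕ) {G : Type} [Group G] (E : Subgroup G) : Prop :=
  (∀ x ∈ E, x ^ p = 1) ∧ ∀ x ∈ E, ∀ y ∈ E, x * y = y * x

/-- Every row of the tabloid `T` is a union of fibers (blocks) of `f`. -/
def rowsUnionOfFibers {n : ℕ} {c : ℕ → ℕ} (f : Fin n → ℕ) (T : Tabloid n c) : Prop :=
  ∀ j x y, f x = f y → x ∈ T.row j → y ∈ T.row j

/-- The number `m_{c,O}`: the number of `c`-tabloids each of whose rows is a
union of blocks of the set partition with labelling `f`. -/
noncomputable def mNumber (n : ℕ) (c : ℕ → ℕ) (f : Fin n → ℕ) : ℕ :=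
  Nat.card {T : Tabloid n c // rowsUnionOfFibers f T}

end Orbits

/-! ## Generic Jordan types -/

section Jordan

/-- The nilpotent Jordan block of size `p` over `K`, as an endomorphism of `K^p`. -/
def jordanShift (p : ℕ) (K : Type) [Field K] : (Fin p → K) →ₗ[K] (Fin p → K) where
  toFun v := fun i => if h : i.val + 1 < p then v ⟨i.val + 1, h⟩ else 0
  map_add' x y := by
    funext i
    by_cases h : (i : ℕ) + 1 < p <;> simp [h]
  map_smul' c x := by
    funext i
    by_cases h : (i : ℕ) + 1 < p <;> simp [h]

/-- The rational function field `F(α_1, …, α_k)`. -/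
abbrev RatFuncField (F : Type) [Field F] (k : ℕ) : Type :=
  FractionRing (MvPolynomial (Fin k) F)

/-- The operator `u_α − 1 = Σ_i α_i (ρ(g_i) − 1)` on `K ⊗_F V`, where
`K = F(α_1,…,α_k)`. -/
noncomputable def uAlphaSubOne {F : Type} [Field F] {G : Type} [Group G]
    {V : Type} [AddCommGroup V] [Module F V]
    (ρ : Representation F G V) (k : ℕ) (g : Fin k → G) :
    TensorProduct F (RatFuncField F k) V →ₗ[RatFuncField F k]
      TensorProduct F (RatFuncField F k) V :=
  ∑ i : Fin k,
    (algebraMap (MvPolynomial (Fin k) F) (RatFuncField F k) (MvPolynomial.X i)) •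
      LinearMap.baseChange (RatFuncField F k) (ρ (g i) - LinearMap.id)

end Jordan


/-- the permutation representation on `X →₀ F` -/
noncomputable def permRepF (F : Type) [Field F] (G : Type) [Group G] (X : Type) [MulAction G X] :
    Representation F G (X →₀ F) :=
  { toFun := fun g => Finsupp.lmapDomain F F (g • ·)
    map_one' := by ext x y; simp
    map_mul' := fun x y => by ext z w; simp [mul_smul] }

lemma permRepF_apply {F : Type} [Field F] {G : Type} [Group G] {X : Type} [MulAction G X]
    (g : G) (f : X →₀ F) (x : X) : permRepF F G X g f x = f (g⁻¹ • x) := by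
  show Finsupp.mapDomain (g • ·) f x = _
  conv_lhs => rw [← smul_inv_smul g x]
  exact Finsupp.mapDomain_apply (MulAction.injective g) f _

lemma permRepF_single {F : Type} [Field F] {G : Type} [Group G] {X : Type} [MulAction G X]
    (g : G) (x : X) (r : F) : permRepF F G X g (Finsupp.single x r) = Finsupp.single (g • x) r :=
  Finsupp.mapDomain_single

section GenBrauer

variable {F : Type} [Field F] {G : Type} [Group G] [Finite G]
variable {V : Type} [AddCommGroup V] [Module F V]

lemma relTrace_eq (ρ : Representation F G V) (P Q : Subgroup G)
    [inst : Fintype (P ⧸ Q.subgroupOf P)] (v : V) :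
    relTrace ρ P Q v = ∑ x : P ⧸ Q.subgroupOf P, ρ ((Quotient.out x : ↥P) : G) v := by
  unfold relTrace
  rw [show (Fintype.ofFinite (P ⧸ Q.subgroupOf P)) = inst from Subsingleton.elim _ _]

lemma card_quot_cast_zero (p : ℕ) [Fact p.Prime] [CharP F p]
    {P Q : Subgroup G} (hQP : Q < P) (hP : IsPGroup p P)
    [Fintype (P ⧸ Q.subgroupOf P)] :
    ((Fintype.card (P ⧸ Q.subgroupOf P) : F)) = 0 := by
  obtain ⟨k, hk⟩ := hP.exists_card_eq
  have hdvd : (Q.subgroupOf P).index ∣ p ^ k := hk ▸ Subgroup.index_dvd_card _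
  obtain ⟨m, hm, hidx⟩ := (Nat.dvd_prime_pow (Fact.out : p.Prime)).mp hdvd
  have hne : (Q.subgroupOf P).index ≠ 1 := by
    intro h
    rw [Subgroup.index_eq_one, Subgroup.subgroupOf_eq_top] at h
    exact hQP.ne (le_antisymm hQP.le h)
  have hm0 : m ≠ 0 := by rintro rfl; simp [hidx] at hne
  have hc : Fintype.card (P ⧸ Q.subgroupOf P) = p ^ m := by
    rw [← Nat.card_eq_fintype_card, ← Subgroup.index_eq_card, hidx]
  rw [hc, Nat.cast_pow, CharP.cast_eq_zero F p, zero_pow hm0]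

lemma smul_out_relation {P Q : Subgroup G} (g : ↥P) (x : P ⧸ Q.subgroupOf P) :
    ∃ q : ↥P, q ∈ Q.subgroupOf P ∧ g * Quotient.out x = Quotient.out (g • x) * q := by
  have h1 : QuotientGroup.mk (g • Quotient.out x) = g • x :=
    MulAction.Quotient.mk_smul_out (Q.subgroupOf P) g x
  rw [smul_eq_mul] at h1
  have h3 : ((Quotient.out (g • x))⁻¹ * (g * Quotient.out x) : ↥P) ∈ Q.subgroupOf P := by
    rw [← QuotientGroup.eq, QuotientGroup.out_eq', h1]
  exact ⟨_, h3, by group⟩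

lemma relTrace_mem_repFixed {ρ : Representation F G V} {P Q : Subgroup G}
    (hQP : Q ≤ P) {v : V} (hv : v ∈ repFixed ρ Q) :
    relTrace ρ P Q v ∈ repFixed ρ P := by
  have : Fintype (P ⧸ Q.subgroupOf P) := Fintype.ofFinite _
  intro g hg
  rw [relTrace_eq, map_sum]
  refine Fintype.sum_equiv ((MulAction.toPerm (⟨g, hg⟩ : ↥P) : Equiv.Perm (P ⧸ Q.subgroupOf P)))
    (fun x => ρ g (ρ ((Quotient.out x : ↥P) : G) v))
    (fun x => ρ ((Quotient.out x : ↥P) : G) v) (fun x => ?_)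
  obtain ⟨q, hq, hrel⟩ := smul_out_relation (⟨g, hg⟩ : ↥P) x
  show ρ g (ρ ((Quotient.out x : ↥P) : G) v)
      = ρ ((Quotient.out ((⟨g, hg⟩ : ↥P) • x) : ↥P) : G) v
  calc ρ g (ρ ((Quotient.out x : ↥P) : G) v)
      = ρ (((⟨g, hg⟩ * Quotient.out x : ↥P)) : G) v := by
        rw [Subgroup.coe_mul, map_mul]; rfl
    _ = ρ (((Quotient.out ((⟨g, hg⟩ : ↥P) • x) * q : ↥P)) : G) v := by rw [hrel]
    _ = ρ ((Quotient.out ((⟨g, hg⟩ : ↥P) • x) : ↥P) : G) v := by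
        rw [Subgroup.coe_mul, map_mul, Module.End.mul_apply,
          hv q (Subgroup.mem_subgroupOf.mp hq)]

lemma brauerTraceSub_le_repFixed (ρ : Representation F G V) (P : Subgroup G) :
    brauerTraceSub ρ P ≤ repFixed ρ P := by
  rw [brauerTraceSub, Submodule.span_le]
  rintro w ⟨Q, hQP, v, hv, rfl⟩
  exact relTrace_mem_repFixed hQP.le hv

end GenBrauer
section IsoBrauer

variable {F : Type} [Field F] {G : Type} [Group G] [Finite G]
variable {V : Type} [AddCommGroup V] [Module F V]
variable {W : Type} [AddCommGroup W] [Module F W]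

lemma RepIso.symm {ρ : Representation F G V} {σ : Representation F G W}
    (h : RepIso ρ σ) : RepIso σ ρ := by
  obtain ⟨e, he⟩ := h
  refine ⟨e.symm, fun g w => ?_⟩
  apply e.injective
  rw [he, e.apply_symm_apply, e.apply_symm_apply]

lemma RepIso.map_repFixed {ρ : Representation F G V} {σ : Representation F G W}
    (e : V ≃ₗ[F] W) (he : ∀ g v, e (ρ g v) = σ g (e v)) (P : Subgroup G) :
    (repFixed ρ P).map (e : V →ₗ[F] W) = repFixed σ P := by
  ext w
  constructor
  · rintro ⟨v, hv, rfl⟩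
    intro g hg
    simp only [LinearEquiv.coe_coe]
    rw [← he, hv g hg]
  · intro hw
    refine ⟨e.symm w, fun g hg => e.injective ?_, e.apply_symm_apply w⟩
    rw [he, e.apply_symm_apply, hw g hg]

lemma RepIso.relTrace_comm {ρ : Representation F G V} {σ : Representation F G W}
    (e : V ≃ₗ[F] W) (he : ∀ g v, e (ρ g v) = σ g (e v)) (P Q : Subgroup G) (v : V) :
    e (relTrace ρ P Q v) = relTrace σ P Q (e v) := by
  have : Fintype (P ⧸ Q.subgroupOf P) := Fintype.ofFinite _
  rw [relTrace_eq, relTrace_eq, map_sum]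
  exact Finset.sum_congr rfl fun x _ => he _ _

lemma RepIso.map_brauerTraceSub {ρ : Representation F G V} {σ : Representation F G W}
    (e : V ≃ₗ[F] W) (he : ∀ g v, e (ρ g v) = σ g (e v)) (P : Subgroup G) :
    (brauerTraceSub ρ P).map (e : V →ₗ[F] W) = brauerTraceSub σ P := by
  have hsymm : ∀ g w, e.symm (σ g w) = ρ g (e.symm w) := by
    intro g w
    apply e.injective
    rw [he, e.apply_symm_apply, e.apply_symm_apply]
  rw [brauerTraceSub, brauerTraceSub, Submodule.map_span]
  congr 1
  ext w
  constructor
  · rintro ⟨u, ⟨Q, hQP, v, hv, rfl⟩, rfl⟩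
    refine ⟨Q, hQP, e v, ?_, (RepIso.relTrace_comm e he P Q v).symm ▸ rfl⟩
    · intro g hg
      rw [← he, hv g hg]
  · rintro ⟨Q, hQP, v, hv, rfl⟩
    refine ⟨relTrace ρ P Q (e.symm v), ⟨Q, hQP, e.symm v, ?_, rfl⟩, ?_⟩
    · intro g hg
      rw [← hsymm, hv g hg]
    · simp only [LinearEquiv.coe_coe]
      rw [RepIso.relTrace_comm e he, e.apply_symm_apply]

lemma RepIso.brauerDim_eq {ρ : Representation F G V} {σ : Representation F G W}
    (h : RepIso ρ σ) (P : Subgroup G) : brauerDim ρ P = brauerDim σ P := by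
  obtain ⟨e, he⟩ := h
  have hfix := RepIso.map_repFixed e he P
  have htr := RepIso.map_brauerTraceSub e he P
  -- restricted equiv
  let e1 : ↥(repFixed ρ P) ≃ₗ[F] ↥((repFixed ρ P).map (e : V →ₗ[F] W)) :=
    e.submoduleMap (repFixed ρ P)
  let e2 : ↥(repFixed ρ P) ≃ₗ[F] ↥(repFixed σ P) :=
    e1.trans (LinearEquiv.ofEq _ _ hfix)
  have hmap : ((brauerTraceSub ρ P).comap (repFixed ρ P).subtype).map (e2 : _ →ₗ[F] _)
      = (brauerTraceSub σ P).comap (repFixed σ P).subtype := by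
    ext x
    simp only [Submodule.mem_map, Submodule.mem_comap, Submodule.subtype_apply]
    constructor
    · rintro ⟨y, hy, rfl⟩
      have h3 : ((e2 y : W)) = e (y : V) := rfl
      show ((e2 y : W)) ∈ _
      rw [h3, ← htr]
      exact ⟨(y : V), hy, rfl⟩
    · intro hx
      refine ⟨e2.symm x, ?_, e2.apply_symm_apply x⟩
      have h2 : ((e2 (e2.symm x) : W)) = e ((e2.symm x : V)) := rfl
      rw [e2.apply_symm_apply] at h2
      have hxc : ((e2.symm x : V)) = e.symm (x : W) := by
        apply e.injective
        rw [e.apply_symm_apply]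
        exact h2.symm
      show ((e2.symm x : V)) ∈ _
      rw [hxc]
      rw [← htr] at hx
      obtain ⟨v, hv, hvx⟩ := hx
      have h4 : e.symm (x : W) = v := by
        rw [← hvx]
        exact e.symm_apply_apply v
      rw [h4]; exact hv
  rw [brauerDim, brauerDim]
  exact LinearEquiv.finrank_eq (Submodule.Quotient.equiv _ _ e2 hmap)

end IsoBrauer

section GenBrauer2
variable {F : Type} [Field F] {G : Type} [Group G] [Finite G]
variable {V : Type} [AddCommGroup V] [Module F V]

lemma relTrace_zero (ρ : Representation F G V) (P Q : Subgroup G) :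
    relTrace ρ P Q (0 : V) = 0 := by
  have : Fintype (P ⧸ Q.subgroupOf P) := Fintype.ofFinite _
  rw [relTrace_eq]
  simp

end GenBrauer2
section PermBrauer

variable {F : Type} [Field F] {G : Type} [Group G] [Finite G]
variable {X : Type} [Fintype X] [DecidableEq X] [MulAction G X]

/-- evaluation of the permutation representation -/
lemma permRep_fixed_smul {P : Subgroup G} {v : X →₀ F}
    (hv : v ∈ repFixed (permRepF F G X) P)
    {g : G} (hg : g ∈ P) (x : X) : v (g • x) = v x := by
  have h1 : (permRepF F G X g v) (g • x) = v x := by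
    rw [permRepF_apply, inv_smul_smul]
  rw [hv g hg] at h1
  exact h1

lemma permRep_single_mem_fixed {P : Subgroup G} {x : X}
    (hx : ∀ g ∈ P, g • x = x) :
    Finsupp.single x (1 : F) ∈ repFixed (permRepF F G X) P := by
  intro g hg
  rw [permRepF_single, hx g hg]

/-- trace elements evaluate to zero at fixed points -/
lemma brauerTraceSub_apply_fixed_eq_zero (p : ℕ) [Fact p.Prime] [CharP F p]
    {P : Subgroup G} (hP : IsPGroup p P) {x : X} (hx : ∀ g ∈ P, g • x = x)
    {v : X →₀ F} (hv : v ∈ brauerTraceSub (permRepF F G X) P) :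
    v x = 0 := by
  have hker : brauerTraceSub (permRepF F G X) P ≤
      LinearMap.ker (Finsupp.lapply x : (X →₀ F) →ₗ[F] F) := by
    rw [brauerTraceSub, Submodule.span_le]
    rintro w ⟨Q, hQP, u, hu, rfl⟩
    have : Fintype (P ⧸ Q.subgroupOf P) := Fintype.ofFinite _
    simp only [SetLike.mem_coe, LinearMap.mem_ker, Finsupp.lapply_apply]
    rw [relTrace_eq]
    rw [show ((∑ c : P ⧸ Q.subgroupOf P,
        permRepF F G X ((Quotient.out c : ↥P) : G) u) x)
      = ∑ c : P ⧸ Q.subgroupOf P,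
        (permRepF F G X ((Quotient.out c : ↥P) : G) u) x
      from Finset.sum_apply' x]
    have heach : ∀ c : P ⧸ Q.subgroupOf P,
        (permRepF F G X ((Quotient.out c : ↥P) : G) u) x = u x := by
      intro c
      rw [permRepF_apply]
      congr 1
      have : ((Quotient.out c : ↥P) : G)⁻¹ ∈ P := (inv_mem (Quotient.out c).2)
      have h2 := hx _ this
      exact h2
    rw [Finset.sum_congr rfl (fun c _ => heach c), Finset.sum_const, Finset.card_univ,
      nsmul_eq_mul, card_quot_cast_zero p hQP hP, zero_mul]
  exact hker hv

end PermBrauer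

section OrbitSums

variable {F : Type} [Field F] {G : Type} [Group G] [Finite G]
variable {X : Type} [Fintype X] [DecidableEq X] [MulAction G X]

open Classical in
/-- the sum of basis vectors over one `P`-orbit -/
noncomputable def osum (F : Type) [Field F] {G : Type} [Group G]
    {X : Type} [Fintype X] [MulAction G X] (P : Subgroup G)
    (ω : Quotient (MulAction.orbitRel ↥P X)) : X →₀ F :=
  Finsupp.equivFunOnFinite.symm
    (fun y => if Quotient.mk (MulAction.orbitRel ↥P X) y = ω then (1 : F) else 0)

lemma osum_apply_of_eq {P : Subgroup G} {ω} {y : X}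
    (h : Quotient.mk (MulAction.orbitRel ↥P X) y = ω) : osum F P ω y = 1 := by
  show (Finsupp.equivFunOnFinite.symm _ : X →₀ F) y = 1
  rw [Finsupp.coe_equivFunOnFinite_symm]
  simp [h]

lemma osum_apply_of_ne {P : Subgroup G} {ω} {y : X}
    (h : Quotient.mk (MulAction.orbitRel ↥P X) y ≠ ω) : osum F P ω y = 0 := by
  show (Finsupp.equivFunOnFinite.symm _ : X →₀ F) y = 0
  rw [Finsupp.coe_equivFunOnFinite_symm]
  simp [h]

lemma fixed_eq_sum_osum {P : Subgroup G}
    [Fintype (Quotient (MulAction.orbitRel ↥P X))] {v : X →₀ F}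
    (hv : v ∈ repFixed (permRepF F G X) P) :
    v = ∑ ω : Quotient (MulAction.orbitRel ↥P X), v (Quotient.out ω) • osum F P ω := by
  ext y
  rw [show ((∑ ω : Quotient (MulAction.orbitRel ↥P X),
      v (Quotient.out ω) • osum F P ω) y)
    = ∑ ω : Quotient (MulAction.orbitRel ↥P X),
      (v (Quotient.out ω) • osum F P ω) y from Finset.sum_apply' y]
  rw [Finset.sum_eq_single (Quotient.mk (MulAction.orbitRel ↥P X) y)]
  · rw [Finsupp.smul_apply, osum_apply_of_eq rfl, smul_eq_mul, mul_one]
    have hout : Quotient.mk (MulAction.orbitRel ↥P X)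
        (Quotient.out (Quotient.mk (MulAction.orbitRel ↥P X) y))
        = Quotient.mk (MulAction.orbitRel ↥P X) y := Quotient.out_eq _
    obtain ⟨g, hg⟩ := MulAction.mem_orbit_iff.mp
      (MulAction.orbitRel_apply.mp (Quotient.exact hout))
    rw [← hg]
    exact (permRep_fixed_smul hv g.2 y).symm
  · intro ω _ hω
    rw [Finsupp.smul_apply, osum_apply_of_ne (Ne.symm hω), smul_zero]
  · intro h
    exact absurd (Finset.mem_univ _) h

lemma osum_mem_brauerTraceSub {P : Subgroup G} {x : X}
    (hx : ¬ ∀ g ∈ P, g • x = x) :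
    osum F P (Quotient.mk (MulAction.orbitRel ↥P X) x)
      ∈ brauerTraceSub (permRepF F G X) P := by
  set Q : Subgroup G := (MulAction.stabilizer ↥P x).map P.subtype with hQ
  push_neg at hx
  obtain ⟨g0, hg0P, hg0x⟩ := hx
  have hQle : Q ≤ P := by
    rintro g ⟨h, _, rfl⟩
    exact h.2
  have hQP : Q < P := by
    refine lt_of_le_of_ne hQle (fun h => ?_)
    have : g0 ∈ Q := h ▸ hg0P
    obtain ⟨h', hh', hcoe⟩ := this
    apply hg0x
    rw [← hcoe]
    exact hh'
  -- membership of single x 1 in Q-fixed points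
  have hst : ∀ w : ↥P, w ∈ Q.subgroupOf P ↔ w • x = x := by
    intro w
    rw [Subgroup.mem_subgroupOf]
    constructor
    · rintro ⟨h, hh, hcoe⟩
      have : h = w := Subtype.ext hcoe
      rw [← this]
      exact hh
    · intro hw
      exact ⟨w, hw, rfl⟩
  have hxfix : ∀ g ∈ Q, g • x = x := by
    rintro g ⟨h, hh, rfl⟩
    exact hh
  apply Submodule.subset_span
  refine ⟨Q, hQP, Finsupp.single x 1, permRep_single_mem_fixed hxfix, ?_⟩
  -- compute the trace
  have : Fintype (P ⧸ Q.subgroupOf P) := Fintype.ofFinite _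
  rw [relTrace_eq]
  have hinj : ∀ c c' : P ⧸ Q.subgroupOf P,
      (Quotient.out c) • x = (Quotient.out c') • x → c = c' := by
    intro c c' h
    have : ((Quotient.out c')⁻¹ * Quotient.out c) • x = x := by
      rw [mul_smul, h, inv_smul_smul]
    have hmem : (Quotient.out c')⁻¹ * Quotient.out c ∈ Q.subgroupOf P :=
      (hst _).mpr this
    calc c = ((Quotient.out c : ↥P) : P ⧸ Q.subgroupOf P) := (QuotientGroup.out_eq' c).symm
      _ = ((Quotient.out c' : ↥P) : P ⧸ Q.subgroupOf P) := (QuotientGroup.eq.mpr hmem).symm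
      _ = c' := QuotientGroup.out_eq' c'
  have hexists : ∀ y : X, (∃ c : P ⧸ Q.subgroupOf P, (Quotient.out c) • x = y) ↔
      Quotient.mk (MulAction.orbitRel ↥P X) y = Quotient.mk (MulAction.orbitRel ↥P X) x := by
    intro y
    constructor
    · rintro ⟨c, rfl⟩
      exact Quotient.sound (MulAction.orbitRel_apply.mpr
        (MulAction.mem_orbit x (Quotient.out c)))
    · intro h
      obtain ⟨g, hg⟩ := MulAction.mem_orbit_iff.mp (MulAction.orbitRel_apply.mp
        (Quotient.exact h))
      refine ⟨(g : P ⧸ Q.subgroupOf P), ?_⟩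
      have hq : g⁻¹ * Quotient.out ((g : P ⧸ Q.subgroupOf P)) ∈ Q.subgroupOf P := by
        rw [← QuotientGroup.eq, QuotientGroup.out_eq']
      have hqx : (g⁻¹ * Quotient.out ((g : P ⧸ Q.subgroupOf P))) • x = x := (hst _).mp hq
      have : Quotient.out ((g : P ⧸ Q.subgroupOf P)) • x
          = g • ((g⁻¹ * Quotient.out ((g : P ⧸ Q.subgroupOf P))) • x) := by
        rw [← mul_smul, ← mul_assoc, mul_inv_cancel, one_mul]
      rw [this, hqx, hg]
  ext y
  rw [show ((∑ c : P ⧸ Q.subgroupOf P, permRepF F G X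
      ((Quotient.out c : ↥P) : G) (Finsupp.single x 1)) y)
    = ∑ c : P ⧸ Q.subgroupOf P, (permRepF F G X
      ((Quotient.out c : ↥P) : G) (Finsupp.single x 1)) y from Finset.sum_apply' y]
  have hterm : ∀ c : P ⧸ Q.subgroupOf P,
      (permRepF F G X ((Quotient.out c : ↥P) : G)
        (Finsupp.single x (1:F))) y = if (Quotient.out c) • x = y then 1 else 0 := by
    intro c
    rw [permRepF_single, Finsupp.single_apply]
    rfl
  rw [Finset.sum_congr rfl (fun c _ => hterm c)]
  by_cases hy : Quotient.mk (MulAction.orbitRel ↥P X) y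
      = Quotient.mk (MulAction.orbitRel ↥P X) x
  · obtain ⟨c0, hc0⟩ := (hexists y).mpr hy
    rw [osum_apply_of_eq hy]
    have hsum : (∑ c : P ⧸ Q.subgroupOf P, if Quotient.out c • x = y then (1:F) else 0) = 1 := by
      rw [Finset.sum_eq_single c0]
      · exact if_pos hc0
      · intro c _ hc
        exact if_neg (fun h => hc (hinj c c0 (h.trans hc0.symm)))
      · intro h; exact absurd (Finset.mem_univ _) h
    exact hsum.symm
  · rw [osum_apply_of_ne hy]
    exact (Finset.sum_eq_zero (fun c _ => if_neg (fun h => hy ((hexists y).mp ⟨c, h⟩)))).symm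

end OrbitSums

section PermMain

variable {F : Type} [Field F] {G : Type} [Group G] [Finite G]
variable {X : Type} [Fintype X] [DecidableEq X] [MulAction G X]

set_option maxHeartbeats 1000000 in
theorem permRep_brauerDim (p : ℕ) [Fact p.Prime] [CharP F p]
    (P : Subgroup G) (hP : IsPGroup p P) :
    brauerDim (permRepF F G X) P
      = Nat.card {x : X // ∀ g ∈ P, g • x = x} := by
  classical
  set ρ := permRepF F G X with hρ
  set s : Set X := {x | ∀ g ∈ P, g • x = x} with hs
  haveI : Fintype (Quotient (MulAction.orbitRel ↥P X)) := Fintype.ofFinite _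
  -- evaluation at fixed points
  set L : ↥(repFixed ρ P) →ₗ[F] (↑s →₀ F) :=
    (Finsupp.lsubtypeDomain s).comp (repFixed ρ P).subtype with hL
  have hLapp : ∀ (v : ↥(repFixed ρ P)) (a : ↑s), L v a = (v : X →₀ F) (a : X) := by
    intro v a
    rfl
  have hsurj : Function.Surjective L := by
    intro f
    have hmem : Finsupp.mapDomain (Subtype.val : ↑s → X) f ∈ repFixed ρ P := by
      intro g hg
      show Finsupp.mapDomain (g • ·) _ = _
      rw [← Finsupp.mapDomain_comp]
      congr 1
      funext z
      exact z.2 g hg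
    refine ⟨⟨_, hmem⟩, ?_⟩
    ext a
    rw [hLapp]
    exact Finsupp.mapDomain_apply Subtype.val_injective f a
  have hker : LinearMap.ker L = (brauerTraceSub ρ P).comap (repFixed ρ P).subtype := by
    ext v
    simp only [LinearMap.mem_ker, Submodule.mem_comap, Submodule.subtype_apply]
    constructor
    · intro h0
      have hv0 : ∀ x ∈ s, (v : X →₀ F) x = 0 := by
        intro x hx
        have h1 : L v (⟨x, hx⟩ : ↑s) = 0 := by rw [h0]; rfl
        rwa [hLapp] at h1
      rw [fixed_eq_sum_osum v.2]
      apply Submodule.sum_mem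
      intro ω _
      by_cases hω : ∀ g ∈ P, g • (Quotient.out ω : X) = Quotient.out ω
      · rw [hv0 _ hω, zero_smul]
        exact Submodule.zero_mem _
      · refine Submodule.smul_mem _ _ ?_
        have := osum_mem_brauerTraceSub (F := F) (P := P) hω
        rwa [Quotient.out_eq] at this
    · intro hv
      ext a
      rw [hLapp]
      exact brauerTraceSub_apply_fixed_eq_zero p hP a.2 hv
  have e1 := LinearMap.quotKerEquivOfSurjective (R := F) (M := ↥(repFixed ρ P)) (M₂ := ↑s →₀ F) L hsurj
  have e2 := (Submodule.quotEquivOfEq _ _ hker.symm).trans e1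
  rw [brauerDim, e2.finrank_eq]
  haveI : Fintype ↑s := Fintype.ofFinite _
  rw [Module.finrank_finsupp_self]
  exact (Nat.card_eq_fintype_card).symm

end PermMain

section ProdRep

variable {F : Type} [Field F] {G : Type} [Group G] [Finite G]
variable {V : Type} [AddCommGroup V] [Module F V]
variable {W : Type} [AddCommGroup W] [Module F W]

/-- direct sum (product) of two representations -/
def prodRep (ρ : Representation F G V) (σ : Representation F G W) :
    Representation F G (V × W) where
  toFun g := LinearMap.prodMap (ρ g) (σ g)
  map_one' := by ext x <;> simp
  map_mul' g h := by ext x <;> simp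

lemma prodRep_apply (ρ : Representation F G V) (σ : Representation F G W)
    (g : G) (x : V × W) : prodRep ρ σ g x = (ρ g x.1, σ g x.2) := rfl

lemma repFixed_prod (ρ : Representation F G V) (σ : Representation F G W) (P : Subgroup G) :
    repFixed (prodRep ρ σ) P = (repFixed ρ P).prod (repFixed σ P) := by
  ext x
  constructor
  · intro h
    exact ⟨fun g hg => congrArg Prod.fst (h g hg), fun g hg => congrArg Prod.snd (h g hg)⟩
  · rintro ⟨h1, h2⟩ g hg
    rw [prodRep_apply, h1 g hg, h2 g hg]

lemma relTrace_prod (ρ : Representation F G V) (σ : Representation F G W)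
    (P Q : Subgroup G) (x : V × W) :
    relTrace (prodRep ρ σ) P Q x = (relTrace ρ P Q x.1, relTrace σ P Q x.2) := by
  have : Fintype (P ⧸ Q.subgroupOf P) := Fintype.ofFinite _
  rw [relTrace_eq, relTrace_eq, relTrace_eq]
  refine Prod.ext ?_ ?_
  · rw [Prod.fst_sum]
    rfl
  · rw [Prod.snd_sum]
    rfl

lemma brauerTraceSub_prod (ρ : Representation F G V) (σ : Representation F G W)
    (P : Subgroup G) :
    brauerTraceSub (prodRep ρ σ) P = (brauerTraceSub ρ P).prod (brauerTraceSub σ P) := by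
  apply le_antisymm
  · rw [brauerTraceSub, Submodule.span_le]
    rintro w ⟨Q, hQP, v, hv, rfl⟩
    rw [repFixed_prod] at hv
    rw [relTrace_prod]
    constructor
    · exact Submodule.subset_span ⟨Q, hQP, v.1, hv.1, rfl⟩
    · exact Submodule.subset_span ⟨Q, hQP, v.2, hv.2, rfl⟩
  · intro x hx
    obtain ⟨h1, h2⟩ := hx
    have hx1 : ((x.1, (0:W)) : V × W) ∈ brauerTraceSub (prodRep ρ σ) P := by
      have : Submodule.map (LinearMap.inl F V W) (brauerTraceSub ρ P)
          ≤ brauerTraceSub (prodRep ρ σ) P := by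
        rw [brauerTraceSub, Submodule.map_span, Submodule.span_le]
        rintro w ⟨u, ⟨Q, hQP, v, hv, rfl⟩, rfl⟩
        refine Submodule.subset_span ⟨Q, hQP, (v, 0), ?_, ?_⟩
        · rw [repFixed_prod]
          exact ⟨hv, Submodule.zero_mem _⟩
        · rw [relTrace_prod]
          simp only [LinearMap.coe_inl]
          exact Prod.ext rfl (relTrace_zero σ P Q).symm
      exact this ⟨x.1, h1, rfl⟩
    have hx2 : (((0:V), x.2) : V × W) ∈ brauerTraceSub (prodRep ρ σ) P := by
      have : Submodule.map (LinearMap.inr F V W) (brauerTraceSub σ P)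
          ≤ brauerTraceSub (prodRep ρ σ) P := by
        rw [brauerTraceSub, Submodule.map_span, Submodule.span_le]
        rintro w ⟨u, ⟨Q, hQP, v, hv, rfl⟩, rfl⟩
        refine Submodule.subset_span ⟨Q, hQP, (0, v), ?_, ?_⟩
        · rw [repFixed_prod]
          exact ⟨Submodule.zero_mem _, hv⟩
        · rw [relTrace_prod]
          simp only [LinearMap.coe_inr]
          exact Prod.ext (relTrace_zero ρ P Q).symm rfl
      exact this ⟨x.2, h2, rfl⟩
    have : x = (x.1, (0:W)) + ((0:V), x.2) := by simp
    rw [this]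
    exact Submodule.add_mem _ hx1 hx2

theorem brauerDim_prod (ρ : Representation F G V) (σ : Representation F G W)
    [FiniteDimensional F V] [FiniteDimensional F W] (P : Subgroup G) :
    brauerDim (prodRep ρ σ) P = brauerDim ρ P + brauerDim σ P := by
  classical
  have hfix := repFixed_prod ρ σ P
  have htr := brauerTraceSub_prod ρ σ P
  set c1 := (brauerTraceSub ρ P).comap (repFixed ρ P).subtype with hc1
  set c2 := (brauerTraceSub σ P).comap (repFixed σ P).subtype with hc2
  have hm1 : ∀ x : ↥(repFixed (prodRep ρ σ) P), (x : V × W).1 ∈ repFixed ρ P := by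
    intro x
    have h : (x : V × W) ∈ (repFixed ρ P).prod (repFixed σ P) := by
      rw [← hfix]; exact x.2
    exact h.1
  have hm2 : ∀ x : ↥(repFixed (prodRep ρ σ) P), (x : V × W).2 ∈ repFixed σ P := by
    intro x
    have h : (x : V × W) ∈ (repFixed ρ P).prod (repFixed σ P) := by
      rw [← hfix]; exact x.2
    exact h.2
  set f1 : ↥(repFixed (prodRep ρ σ) P) →ₗ[F] ↥(repFixed ρ P) :=
    LinearMap.codRestrict (repFixed ρ P)
      ((LinearMap.fst F V W).comp (repFixed (prodRep ρ σ) P).subtype) hm1 with hf1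
  set f2 : ↥(repFixed (prodRep ρ σ) P) →ₗ[F] ↥(repFixed σ P) :=
    LinearMap.codRestrict (repFixed σ P)
      ((LinearMap.snd F V W).comp (repFixed (prodRep ρ σ) P).subtype) hm2 with hf2
  set Θ : ↥(repFixed (prodRep ρ σ) P) →ₗ[F]
      (↥(repFixed ρ P) ⧸ c1) × (↥(repFixed σ P) ⧸ c2) :=
    LinearMap.prod (c1.mkQ.comp f1) (c2.mkQ.comp f2) with hΘ
  have hsurj : Function.Surjective Θ := by
    rintro ⟨a, b⟩
    obtain ⟨y, rfl⟩ := Submodule.mkQ_surjective c1 a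
    obtain ⟨z, rfl⟩ := Submodule.mkQ_surjective c2 b
    have hmem : ((y : V), (z : W)) ∈ repFixed (prodRep ρ σ) P := by
      rw [hfix]
      exact ⟨y.2, z.2⟩
    refine ⟨⟨((y : V), (z : W)), hmem⟩, ?_⟩
    refine Prod.ext ?_ ?_
    · show c1.mkQ (f1 _) = c1.mkQ y
      congr 1
    · show c2.mkQ (f2 _) = c2.mkQ z
      congr 1
  have hker : LinearMap.ker Θ
      = (brauerTraceSub (prodRep ρ σ) P).comap (repFixed (prodRep ρ σ) P).subtype := by
    ext x
    simp only [LinearMap.mem_ker, Submodule.mem_comap, Submodule.subtype_apply]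
    rw [htr]
    constructor
    · intro h
      have h1 : c1.mkQ (f1 x) = 0 := congrArg Prod.fst h
      have h2 : c2.mkQ (f2 x) = 0 := congrArg Prod.snd h
      rw [Submodule.mkQ_apply, Submodule.Quotient.mk_eq_zero] at h1 h2
      exact ⟨h1, h2⟩
    · rintro ⟨h1, h2⟩
      refine Prod.ext ?_ ?_
      · show c1.mkQ (f1 x) = 0
        rw [Submodule.mkQ_apply, Submodule.Quotient.mk_eq_zero]
        exact h1
      · show c2.mkQ (f2 x) = 0
        rw [Submodule.mkQ_apply, Submodule.Quotient.mk_eq_zero]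
        exact h2
  have e1 := LinearMap.quotKerEquivOfSurjective Θ hsurj
  have e2 := (Submodule.quotEquivOfEq _ _ hker.symm).trans e1
  rw [brauerDim, e2.finrank_eq, brauerDim, brauerDim]
  exact Module.finrank_prod

end ProdRep

section TrivRep

variable {F : Type} [Field F] {G : Type} [Group G] [Finite G]

theorem brauerDim_triv (p : ℕ) [Fact p.Prime] [CharP F p]
    (P : Subgroup G) (hP : IsPGroup p P) :
    brauerDim (1 : Representation F G F) P = 1 := by
  have hfix : repFixed (1 : Representation F G F) P = ⊤ := by
    rw [eq_top_iff]
    intro v _ g _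
    rfl
  have htr : brauerTraceSub (1 : Representation F G F) P = ⊥ := by
    rw [brauerTraceSub, Submodule.span_eq_bot]
    rintro w ⟨Q, hQP, v, _, rfl⟩
    have : Fintype (P ⧸ Q.subgroupOf P) := Fintype.ofFinite _
    rw [relTrace_eq]
    have : ∀ c : P ⧸ Q.subgroupOf P,
        (1 : Representation F G F) ((Quotient.out c : ↥P) : G) v = v := fun c => rfl
    rw [Finset.sum_congr rfl (fun c _ => this c), Finset.sum_const, Finset.card_univ,
      nsmul_eq_mul, card_quot_cast_zero p hQP hP, zero_mul]
  have e2 : (↥(repFixed (1 : Representation F G F) P) ⧸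
      (brauerTraceSub (1 : Representation F G F) P).comap
        (repFixed (1 : Representation F G F) P).subtype) ≃ₗ[F] F := by
    refine (Submodule.quotEquivOfEqBot _ ?_).trans
      ((LinearEquiv.ofEq _ _ hfix).trans Submodule.topEquiv)
    rw [htr, Submodule.comap_bot, Submodule.ker_subtype]
  rw [brauerDim, e2.finrank_eq, Module.finrank_self]

end TrivRep

section TabloidEquiv

lemma Finset.min'_eq_of_singleton {α : Type} [LinearOrder α] (s : Finset α)
    (h : s.Nonempty) (a : α) (hs : s = {a}) : s.min' h = a := by
  subst hs
  exact Finset.min'_singleton a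

variable {n : ℕ}

/-- the hook composition (n-1,1) -/
def lamNN (n : ℕ) : ℕ → ℕ := fun j => if j = 0 then n - 1 else if j = 1 then 1 else 0

lemma tab_row1_card (T : Tabloid n (lamNN n)) : (T.row 1).card = 1 := by
  rw [T.card_row 1]
  rfl

/-- extract the entry of row 1 -/
noncomputable def tabPoint (T : Tabloid n (lamNN n)) : Fin n :=
  (T.row 1).min' (Finset.card_pos.mp (by rw [tab_row1_card T]; norm_num))

lemma tab_row1_eq (T : Tabloid n (lamNN n)) : T.row 1 = {tabPoint T} := by
  obtain ⟨a, ha⟩ := Finset.card_eq_one.mp (tab_row1_card T)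
  have h2 : tabPoint T = a := Finset.min'_eq_of_singleton _ _ a ha
  rw [ha, h2]

lemma tab_row0_eq (hn : 2 ≤ n) (T : Tabloid n (lamNN n)) :
    T.row 0 = {tabPoint T}ᶜ := by
  have hsub : T.row 0 ⊆ {tabPoint T}ᶜ := by
    intro y hy
    rw [Finset.mem_compl, Finset.notMem_singleton]
    intro hcontr
    have : y ∈ T.row 1 := by rw [tab_row1_eq T, Finset.mem_singleton]; exact hcontr
    exact (Finset.disjoint_left.mp (T.disj 0 1 (by norm_num)) hy) this
  refine Finset.eq_of_subset_of_card_le hsub ?_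
  rw [Finset.card_compl, T.card_row 0, Finset.card_singleton, Fintype.card_fin]
  rfl

lemma tab_row_ge2_eq (T : Tabloid n (lamNN n)) {j : ℕ} (hj : 2 ≤ j) :
    T.row j = ∅ := by
  rw [← Finset.card_eq_zero, T.card_row j]
  unfold lamNN
  rw [if_neg (by omega), if_neg (by omega)]

/-- building a hook tabloid from a point -/
def mkTab (hn : 2 ≤ n) (x : Fin n) : Tabloid n (lamNN n) where
  row j := if j = 0 then {x}ᶜ else if j = 1 then {x} else ∅
  disj i j hij := by
    split_ifs <;>
      simp_all [Finset.disjoint_left, Finset.mem_compl]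
  card_row j := by
    unfold lamNN
    split_ifs with h1 h2
    · rw [Finset.card_compl, Finset.card_singleton, Fintype.card_fin]
    · exact Finset.card_singleton x
    · exact Finset.card_empty
  cover y := by
    by_cases hy : y = x
    · exact ⟨1, by simp [hy]⟩
    · exact ⟨0, by simp [hy]⟩

lemma smul_tab_row (σ : Equiv.Perm (Fin n)) (T : Tabloid n (lamNN n)) (j : ℕ) :
    (σ • T).row j = (T.row j).image σ := rfl

/-- the equivariant bijection between hook tabloids and points -/
noncomputable def tabEquiv (hn : 2 ≤ n) : Tabloid n (lamNN n) ≃ Fin n where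
  toFun := tabPoint
  invFun := mkTab hn
  left_inv T := by
    apply Tabloid.ext'
    funext j
    show (if j = 0 then _ else if j = 1 then _ else _) = T.row j
    split_ifs with h1 h2
    · rw [h1, tab_row0_eq hn T]
    · rw [h2, tab_row1_eq T]
    · rw [tab_row_ge2_eq T (by omega)]
  right_inv x := by
    apply Finset.min'_eq_of_singleton _ _ x
    simp [mkTab]

lemma tabEquiv_equivariant (hn : 2 ≤ n) (σ : Equiv.Perm (Fin n)) (T : Tabloid n (lamNN n)) :
    tabEquiv hn (σ • T) = σ • (tabEquiv hn T) := by
  show tabPoint (σ • T) = σ • tabPoint T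
  apply Finset.min'_eq_of_singleton _ _ _
  rw [smul_tab_row, tab_row1_eq T, Finset.image_singleton]
  rfl

end TabloidEquiv

section YoungIso

variable {F : Type} [Field F] {G : Type} [Group G]

lemma repIso_ofMulAction {X Y : Type} [MulAction G X] [MulAction G Y]
    (e : X ≃ Y) (he : ∀ (g : G) (x : X), e (g • x) = g • e x) :
    RepIso (permRepF F G X) (permRepF F G Y) := by
  refine ⟨Finsupp.domLCongr e, ?_⟩
  intro g v
  induction v using Finsupp.induction_linear with
  | zero => simp
  | add f1 f2 hf1 hf2 => simp only [map_add, hf1, hf2]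
  | single a b =>
      rw [permRepF_single, Finsupp.domLCongr_single,
        Finsupp.domLCongr_single, permRepF_single, he]

lemma repIso_young_nat (n : ℕ) (hn : 2 ≤ n) :
    RepIso (youngRep F n (lamNN n))
      (permRepF F (Equiv.Perm (Fin n)) (Fin n)) :=
  repIso_ofMulAction (tabEquiv hn) (fun σ T => tabEquiv_equivariant hn σ T)

lemma youngRep_single {n : ℕ} {c : ℕ → ℕ} (g : Equiv.Perm (Fin n)) (T : Tabloid n c) (r : F) :
    youngRep F n c g (Finsupp.single T r) = Finsupp.single (g • T) r :=
  permRepF_single g T r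

lemma youngRep_apply {n : ℕ} {c : ℕ → ℕ} (g : Equiv.Perm (Fin n)) (f : Tabloid n c →₀ F)
    (T : Tabloid n c) : youngRep F n c g f T = f (g⁻¹ • T) :=
  permRepF_apply g f T

end YoungIso

section MuN

/-- the partition (n) -/
def muN (n : ℕ) : ℕ → ℕ := fun j => if j = 0 then n else 0

lemma muN_partition (n : ℕ) : IsPartitionFn (muN n) n := by
  refine ⟨⟨?_, ?_⟩, ?_⟩
  · apply Set.Finite.subset (Set.finite_singleton 0)
    intro j hj
    by_contra hj0
    simp only [Set.mem_singleton_iff] at hj0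
    exact hj (by simp [muN, hj0])
  · rw [finsum_eq_single _ 0 (fun j hj => by simp [muN, hj])]
    simp [muN]
  · intro j k hjk
    unfold muN
    split_ifs with h1 h2 <;> omega

lemma muN_strict_dominates (n : ℕ) (hn : 2 ≤ n) :
    StrictDominates (muN n) (lamNN n) := by
  constructor
  · intro N
    have hlam : ∀ j, lamNN n j = (if j = 0 then n - 1 else 0) + (if j = 1 then 1 else 0) := by
      intro j
      unfold lamNN
      split_ifs <;> omega
    rw [Finset.sum_congr rfl (fun j _ => hlam j), Finset.sum_add_distrib,
      Finset.sum_ite_eq' (Finset.range N) 0 (fun _ => n - 1),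
      Finset.sum_ite_eq' (Finset.range N) 1 (fun _ => 1)]
    unfold muN
    rw [Finset.sum_ite_eq' (Finset.range N) 0 (fun _ => n)]
    simp only [Finset.mem_range]
    split_ifs <;> omega
  · intro h
    have := congrFun h 1
    simp [muN, lamNN] at this

/-- the unique (n)-tabloid -/
def tabN (n : ℕ) : Tabloid n (muN n) where
  row j := if j = 0 then Finset.univ else ∅
  disj i j hij := by
    split_ifs with h1 h2 h3 <;> simp_all
  card_row j := by
    unfold muN
    split_ifs
    · rw [Finset.card_univ, Fintype.card_fin]
    · exact Finset.card_empty
  cover y := ⟨0, by simp⟩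

lemma smul_tabN (n : ℕ) (σ : Equiv.Perm (Fin n)) : σ • tabN n = tabN n := by
  apply Tabloid.ext'
  funext j
  show ((tabN n).row j).image σ = (tabN n).row j
  by_cases hj : j = 0
  · subst hj
    have h0 : (tabN n).row 0 = Finset.univ := rfl
    rw [h0]
    apply Finset.eq_univ_of_forall
    intro y
    exact Finset.mem_image.mpr ⟨σ⁻¹ y, Finset.mem_univ _, by simp⟩
  · have h0 : (tabN n).row j = ∅ := by
      show (if j = 0 then _ else ∅) = ∅
      rw [if_neg hj]
    rw [h0, Finset.image_empty]

end MuN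

section NatModule

variable (F : Type) [Field F] (n : ℕ)

/-- the all-ones vector -/
noncomputable def oneM : Fin n →₀ F := ∑ x : Fin n, Finsupp.single x 1

variable {F n}

lemma oneM_apply (y : Fin n) : oneM F n y = 1 := by
  rw [oneM, show ((∑ x : Fin n, Finsupp.single x (1:F)) y)
    = ∑ x : Fin n, (Finsupp.single x (1:F)) y from Finset.sum_apply' y]
  simp only [Finsupp.single_apply]
  rw [Finset.sum_ite_eq' (Finset.univ) y (fun _ => (1:F)), if_pos (Finset.mem_univ y)]

variable (F n) in
/-- the augmentation map -/
noncomputable def augM : (Fin n →₀ F) →ₗ[F] F where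
  toFun v := ∑ x : Fin n, v x
  map_add' v w := by simp [Finsupp.add_apply, Finset.sum_add_distrib]
  map_smul' c v := by simp [Finsupp.smul_apply, Finset.mul_sum]

lemma augM_apply (v : Fin n →₀ F) : augM F n v = ∑ x : Fin n, v x := rfl

lemma augM_single (y : Fin n) (c : F) : augM F n (Finsupp.single y c) = c := by
  rw [augM_apply]
  simp only [Finsupp.single_apply]
  rw [Finset.sum_ite_eq (Finset.univ) y (fun _ => c), if_pos (Finset.mem_univ y)]

lemma augM_oneM : augM F n (oneM F n) = (n : F) := by
  rw [augM_apply]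
  rw [Finset.sum_congr rfl (fun y _ => oneM_apply y)]
  rw [Finset.sum_const, Finset.card_univ, Fintype.card_fin, nsmul_eq_mul, mul_one]

/-- shorthand for the natural permutation representation -/
noncomputable abbrev natRep (F : Type) [Field F] (n : ℕ) :
    Representation F (Equiv.Perm (Fin n)) (Fin n →₀ F) :=
  permRepF F (Equiv.Perm (Fin n)) (Fin n)

lemma augM_equivariant (g : Equiv.Perm (Fin n)) (v : Fin n →₀ F) :
    augM F n (natRep F n g v) = augM F n v := by
  rw [augM_apply, augM_apply]
  rw [Finset.sum_congr rfl (fun y _ => permRepF_apply g v y)]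
  exact Equiv.sum_comp (g⁻¹ : Equiv.Perm (Fin n)) (fun y => v y)

lemma natRep_oneM (g : Equiv.Perm (Fin n)) : natRep F n g (oneM F n) = oneM F n := by
  ext y
  rw [permRepF_apply, oneM_apply, oneM_apply]

variable (F n) in
noncomputable def CMsub : Submodule F (Fin n →₀ F) := Submodule.span F {oneM F n}

variable (F n) in
noncomputable def SMsub : Submodule F (Fin n →₀ F) := LinearMap.ker (augM F n)

lemma mem_CMsub_iff {v : Fin n →₀ F} : v ∈ CMsub F n ↔ ∃ c : F, c • oneM F n = v :=
  Submodule.mem_span_singleton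

lemma CMsub_invariant (g : Equiv.Perm (Fin n)) {v : Fin n →₀ F} (hv : v ∈ CMsub F n) :
    natRep F n g v ∈ CMsub F n := by
  obtain ⟨c, rfl⟩ := mem_CMsub_iff.mp hv
  rw [map_smul, natRep_oneM]
  exact Submodule.smul_mem _ _ (Submodule.mem_span_singleton_self _)

lemma SMsub_invariant (g : Equiv.Perm (Fin n)) {v : Fin n →₀ F} (hv : v ∈ SMsub F n) :
    natRep F n g v ∈ SMsub F n := by
  rw [SMsub, LinearMap.mem_ker] at hv ⊢
  rw [augM_equivariant, hv]

lemma oneM_ne_zero (hn : 1 ≤ n) : (oneM F n) ≠ 0 := by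
  intro h
  have := oneM_apply (F := F) (⟨0, by omega⟩ : Fin n)
  rw [h] at this
  simp at this

lemma SMsub_ne_bot (hn : 2 ≤ n) : SMsub F n ≠ ⊥ := by
  intro h
  set x0 : Fin n := ⟨0, by omega⟩
  set x1 : Fin n := ⟨1, by omega⟩
  have hne : x0 ≠ x1 := by
    intro hc
    have := congrArg Fin.val hc
    simp [x0, x1] at this
  have hmem : Finsupp.single x0 (1:F) - Finsupp.single x1 1 ∈ SMsub F n := by
    rw [SMsub, LinearMap.mem_ker, map_sub, augM_single, augM_single, sub_self]
  rw [h, Submodule.mem_bot] at hmem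
  have := congrArg (fun v : Fin n →₀ F => v x0) hmem
  simp [Finsupp.single_apply, hne, Ne.symm hne] at this

lemma CMsub_ne_bot (hn : 1 ≤ n) : CMsub F n ≠ ⊥ := by
  intro h
  have : oneM F n ∈ CMsub F n := Submodule.mem_span_singleton_self (oneM F n)
  rw [h, Submodule.mem_bot] at this
  exact oneM_ne_zero hn this

lemma SMsub_ne_top (hn : 1 ≤ n) : SMsub F n ≠ ⊤ := by
  intro h
  have : Finsupp.single (⟨0, by omega⟩ : Fin n) (1:F) ∈ SMsub F n := by
    rw [h]; exact Submodule.mem_top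
  rw [SMsub, LinearMap.mem_ker, augM_single] at this
  exact one_ne_zero this

/-- invariant submodules are contained in the constants or contain the
augmentation kernel -/
lemma invariant_lattice (hn : 2 ≤ n) (A : Submodule F (Fin n →₀ F))
    (hA : ∀ g : Equiv.Perm (Fin n), ∀ v ∈ A, natRep F n g v ∈ A) :
    A ≤ CMsub F n ∨ SMsub F n ≤ A := by
  by_cases hAC : A ≤ CMsub F n
  · exact Or.inl hAC
  right
  rw [SetLike.not_le_iff_exists] at hAC
  obtain ⟨v, hvA, hvC⟩ := hAC
  set x0 : Fin n := ⟨0, by omega⟩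
  have hnc : ∃ i j : Fin n, v i ≠ v j := by
    by_contra h
    push_neg at h
    apply hvC
    rw [mem_CMsub_iff]
    refine ⟨v x0, ?_⟩
    ext y
    simp only [Finsupp.smul_apply, smul_eq_mul]
    rw [oneM_apply, mul_one]
    exact h x0 y
  obtain ⟨i, j, hvij⟩ := hnc
  have hij : i ≠ j := fun h => hvij (h ▸ rfl)
  have hd : natRep F n (Equiv.swap i j) v - v
      = (v j - v i) • (Finsupp.single i 1 - Finsupp.single j 1) := by
    ext y
    rw [Finsupp.sub_apply, Finsupp.smul_apply, Finsupp.sub_apply,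
      permRepF_apply]
    have hsw : (Equiv.swap i j)⁻¹ • y = Equiv.swap i j y := by
      rw [Equiv.swap_inv]; rfl
    rw [hsw]
    rcases eq_or_ne y i with rfl | hyi
    · rw [Equiv.swap_apply_left]
      simp [Finsupp.single_apply, hij, Ne.symm hij]
    rcases eq_or_ne y j with rfl | hyj
    · rw [Equiv.swap_apply_right]
      simp [Finsupp.single_apply, hij, Ne.symm hij]
    · rw [Equiv.swap_apply_of_ne_of_ne hyi hyj]
      simp [Finsupp.single_apply, Ne.symm hyi, Ne.symm hyj]
  have heij : Finsupp.single i (1:F) - Finsupp.single j 1 ∈ A := by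
    have hdA : natRep F n (Equiv.swap i j) v - v ∈ A :=
      Submodule.sub_mem _ (hA _ v hvA) hvA
    rw [hd] at hdA
    have hc : (v j - v i) ≠ 0 := sub_ne_zero.mpr (Ne.symm hvij)
    have := Submodule.smul_mem A (v j - v i)⁻¹ hdA
    rwa [smul_smul, inv_mul_cancel₀ hc, one_smul] at this
  have hstep : ∀ k : Fin n, Finsupp.single k (1:F) - Finsupp.single j 1 ∈ A := by
    intro k
    rcases eq_or_ne k i with rfl | hki
    · exact heij
    rcases eq_or_ne k j with rfl | hkj
    · rw [sub_self]; exact Submodule.zero_mem _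
    · have hmem := hA (Equiv.swap i k) _ heij
      have : natRep F n (Equiv.swap i k) (Finsupp.single i (1:F) - Finsupp.single j 1)
          = Finsupp.single k 1 - Finsupp.single j 1 := by
        rw [map_sub, permRepF_single, permRepF_single]
        have h1 : (Equiv.swap i k) • i = k := Equiv.swap_apply_left i k
        have h2 : (Equiv.swap i k) • j = j :=
          Equiv.swap_apply_of_ne_of_ne (Ne.symm hij) (Ne.symm hkj)
        rw [h1, h2]
      rwa [this] at hmem
  have hall : ∀ k l : Fin n, Finsupp.single k (1:F) - Finsupp.single l 1 ∈ A := by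
    intro k l
    have : Finsupp.single k (1:F) - Finsupp.single l 1
        = (Finsupp.single k 1 - Finsupp.single j 1)
          - (Finsupp.single l 1 - Finsupp.single j 1) := (sub_sub_sub_cancel_right _ _ _).symm
    rw [this]
    exact Submodule.sub_mem _ (hstep k) (hstep l)
  intro w hw
  rw [SMsub, LinearMap.mem_ker, augM_apply] at hw
  have hw1 : w = ∑ x : Fin n, w x • (Finsupp.single x (1:F) - Finsupp.single x0 1) := by
    have h1 : ∑ x : Fin n, w x • Finsupp.single x (1:F) = w := by
      ext y
      rw [show ((∑ x : Fin n, w x • Finsupp.single x (1:F)) y)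
        = ∑ x : Fin n, (w x • Finsupp.single x (1:F)) y from Finset.sum_apply' y]
      simp only [Finsupp.smul_apply, Finsupp.single_apply, smul_eq_mul, mul_ite, mul_one, mul_zero]
      rw [Finset.sum_ite_eq' (Finset.univ) y (fun x => w x), if_pos (Finset.mem_univ y)]
    have h2 : ∑ x : Fin n, w x • Finsupp.single x0 (1:F)
        = (∑ x : Fin n, w x) • Finsupp.single x0 (1:F) := (Finset.sum_smul).symm
    calc w = ∑ x : Fin n, w x • Finsupp.single x (1:F)
          - (∑ x : Fin n, w x) • Finsupp.single x0 (1:F) := by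
            rw [hw, zero_smul, sub_zero, h1]
      _ = ∑ x : Fin n, w x • (Finsupp.single x (1:F) - Finsupp.single x0 1) := by
            rw [← h2, ← Finset.sum_sub_distrib]
            exact Finset.sum_congr rfl (fun x _ => (smul_sub _ _ _).symm)
  rw [hw1]
  exact Submodule.sum_mem _ (fun x _ => Submodule.smul_mem _ _ (hall x x0))

lemma SMsub_le_eq_top {A : Submodule F (Fin n →₀ F)} (hSA : SMsub F n ≤ A)
    (hne : A ≠ SMsub F n) : A = ⊤ := by
  have hex : ∃ a ∈ A, a ∉ SMsub F n := by
    by_contra h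
    push_neg at h
    exact hne (le_antisymm h hSA)
  obtain ⟨a, haA, haS⟩ := hex
  have haug : augM F n a ≠ 0 := by
    intro h
    exact haS (LinearMap.mem_ker.mpr h)
  rw [eq_top_iff]
  intro m _
  have hmem : m - (augM F n m / augM F n a) • a ∈ SMsub F n := by
    rw [SMsub, LinearMap.mem_ker, map_sub, map_smul, smul_eq_mul,
      div_mul_cancel₀ _ haug, sub_self]
  have := Submodule.add_mem A (hSA hmem) (Submodule.smul_mem A (augM F n m / augM F n a) haA)
  rwa [sub_add_cancel] at this

lemma CMsub_inf_SMsub (hn0 : (n : F) ≠ 0) : CMsub F n ⊓ SMsub F n = ⊥ := by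
  rw [eq_bot_iff]
  rintro v ⟨h1, h2⟩
  obtain ⟨c, rfl⟩ := mem_CMsub_iff.mp h1
  rw [SMsub, SetLike.mem_coe, LinearMap.mem_ker, map_smul, augM_oneM, smul_eq_mul] at h2
  rcases mul_eq_zero.mp h2 with hc | hc
  · rw [hc, zero_smul]; exact Submodule.zero_mem _
  · exact absurd hc hn0

lemma le_CMsub_eq {B : Submodule F (Fin n →₀ F)} (hB : B ≤ CMsub F n) (hBne : B ≠ ⊥) :
    B = CMsub F n := by
  have hex : ∃ b ∈ B, b ≠ 0 := by
    by_contra h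
    push_neg at h
    exact hBne (eq_bot_iff.mpr (fun b hb => Submodule.mem_bot _ |>.mpr (h b hb)))
  obtain ⟨b, hbB, hb0⟩ := hex
  obtain ⟨c, hc⟩ := mem_CMsub_iff.mp (hB hbB)
  have hc0 : c ≠ 0 := by
    intro h
    rw [h, zero_smul] at hc
    exact hb0 hc.symm
  refine le_antisymm hB ?_
  rw [CMsub, Submodule.span_le, Set.singleton_subset_iff]
  have := Submodule.smul_mem B c⁻¹ hbB
  rw [← hc, smul_smul, inv_mul_cancel₀ hc0, one_smul] at this
  exact this

lemma CMsub_le_SMsub (hn0 : (n : F) = 0) : CMsub F n ≤ SMsub F n := by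
  rw [CMsub, Submodule.span_le, Set.singleton_subset_iff]
  rw [SetLike.mem_coe, SMsub, LinearMap.mem_ker, augM_oneM, hn0]

lemma CMsub_sup_SMsub (hn0 : (n : F) ≠ 0) : CMsub F n ⊔ SMsub F n = ⊤ := by
  rw [eq_top_iff]
  intro m _
  have h1 : (augM F n m / (n : F)) • oneM F n ∈ CMsub F n :=
    Submodule.smul_mem _ _ (Submodule.mem_span_singleton_self _)
  have h2 : m - (augM F n m / (n : F)) • oneM F n ∈ SMsub F n := by
    rw [SMsub, LinearMap.mem_ker, map_sub, map_smul, augM_oneM, smul_eq_mul,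
      div_mul_cancel₀ _ hn0, sub_self]
  have := Submodule.add_mem _ (Submodule.mem_sup_left h1) (Submodule.mem_sup_right h2)
  rwa [add_sub_cancel] at this

end NatModule

section Counting

lemma count_orbitType (n : ℕ) (P : Subgroup (Equiv.Perm (Fin n))) :
    Multiset.count 1 (orbitType n P)
      = Nat.card {x : Fin n // ∀ g ∈ P, g • x = x} := by
  classical
  have k1 : ∀ x : Fin n, (∀ g ∈ P, g • x = x) ↔ MulAction.orbit P x = {x} := by
    intro x
    constructor
    · intro h
      apply Set.eq_singleton_iff_unique_mem.mpr
      refine ⟨MulAction.mem_orbit_self x, ?_⟩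
      intro y hy
      obtain ⟨g, rfl⟩ := MulAction.mem_orbit_iff.mp hy
      exact h g g.2
    · intro h g hg
      have hx : (⟨g, hg⟩ : ↥P) • x ∈ MulAction.orbit P x := MulAction.mem_orbit _ _
      rw [h, Set.mem_singleton_iff] at hx
      exact hx
  have k2 : ∀ x : Fin n, (MulAction.orbit P x).ncard = 1 ↔ MulAction.orbit P x = {x} := by
    intro x
    constructor
    · intro h
      obtain ⟨a, ha⟩ := Set.ncard_eq_one.mp h
      have hx : x ∈ MulAction.orbit P x := MulAction.mem_orbit_self x
      rw [ha, Set.mem_singleton_iff] at hx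
      rw [ha, hx]
    · intro h
      rw [h]
      exact Set.ncard_singleton x
  unfold orbitType
  rw [Multiset.count_map]
  have hfseq : Multiset.filter (fun a => 1 = a.ncard)
      (Finset.image (fun x : Fin n => MulAction.orbit P x) Finset.univ).val
      = ((Finset.image (fun x : Fin n => MulAction.orbit P x) Finset.univ).filter
          (fun a => 1 = a.ncard)).val := by
    rw [Finset.filter_val]
  rw [hfseq]
  rw [show Multiset.card ((Finset.image (fun x : Fin n => MulAction.orbit P x)
      Finset.univ).filter (fun a => 1 = a.ncard)).val
    = ((Finset.image (fun x : Fin n => MulAction.orbit P x) Finset.univ).filter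
        (fun a => 1 = a.ncard)).card from rfl]
  have himg : (Finset.image (fun x : Fin n => MulAction.orbit P x) Finset.univ).filter
        (fun a => 1 = a.ncard)
      = Finset.image (fun x : Fin n => MulAction.orbit P x)
          (Finset.univ.filter (fun x => ∀ g ∈ P, g • x = x)) := by
    ext s
    rw [Finset.mem_filter, Finset.mem_image, Finset.mem_image]
    constructor
    · rintro ⟨⟨x, _, rfl⟩, h1⟩
      refine ⟨x, ?_, rfl⟩
      rw [Finset.mem_filter]
      exact ⟨Finset.mem_univ x, (k1 x).mpr ((k2 x).mp h1.symm)⟩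
    · rintro ⟨x, hx, rfl⟩
      rw [Finset.mem_filter] at hx
      refine ⟨⟨x, Finset.mem_univ x, rfl⟩, ?_⟩
      exact ((k2 x).mpr ((k1 x).mp hx.2)).symm
  rw [himg, Finset.card_image_of_injOn, Nat.card_eq_fintype_card, Fintype.card_subtype]
  intro x hx y hy hxy
  rw [Finset.coe_filter, Set.mem_setOf_eq] at hx hy
  have h1 := (k1 x).mp hx.2
  have h2 := (k1 y).mp hy.2
  dsimp only at hxy
  rw [h1, h2] at hxy
  exact Set.singleton_eq_singleton_iff.mp hxy

end Counting

/-- `dim_F Y^{(n-1,1)}(P)` in terms of the number `a_0` of fixed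
points of `P`. -/
theorem stmt_18 (p : ℕ) [Fact p.Prime] (F : Type) [Field F] [IsAlgClosed F] [CharP F p]
    (n : ℕ) (hn : 2 ≤ n)
    (V : Type) [AddCommGroup V] [Module F V] [FiniteDimensional F V]
    (ρ : Representation F (Equiv.Perm (Fin n)) V)
    (hY : IsYoungModuleFor F n (fun j => if j = 0 then n - 1 else if j = 1 then 1 else 0) ρ)
    (P : Subgroup (Equiv.Perm (Fin n))) (hP : IsPGroup p P)
    (a0 : ℕ) (ha0 : Multiset.count 1 (orbitType n P) = a0) :
    (a0 = 0 → brauerDim ρ P = 0) ∧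
    (1 ≤ a0 → brauerDim ρ P = if p ∣ n then a0 else a0 - 1) := by
  classical
  obtain ⟨hInd, hSum, hNotDom⟩ := hY
  have hYiso : RepIso (youngRep F n (fun j => if j = 0 then n - 1 else if j = 1 then 1 else 0))
      (natRep F n) := repIso_young_nat n hn
  obtain ⟨eY, heY⟩ := hYiso
  obtain ⟨ι1, π1, hι1, hπ1, hπι1⟩ := hSum
  set ι : V →ₗ[F] (Fin n →₀ F) := (eY : _ →ₗ[F] _).comp ι1 with hιdef
  set π : (Fin n →₀ F) →ₗ[F] V := π1.comp (eY.symm : _ →ₗ[F] _) with hπdef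
  have hιg : ∀ g v, ι (ρ g v) = natRep F n g (ι v) := by
    intro g v
    show eY (ι1 (ρ g v)) = natRep F n g (eY (ι1 v))
    rw [hι1, heY]
  have hπg : ∀ g m, π (natRep F n g m) = ρ g (π m) := by
    intro g m
    show π1 (eY.symm (natRep F n g m)) = ρ g (π1 (eY.symm m))
    rw [← hπ1]
    congr 1
    apply eY.injective
    rw [heY, eY.apply_symm_apply, eY.apply_symm_apply]
  have hπι : ∀ v, π (ι v) = v := by
    intro v
    show π1 (eY.symm (eY (ι1 v))) = v
    rw [eY.symm_apply_apply, hπι1]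
  have hιinj : Function.Injective ι := fun a b h => by
    rw [← hπι a, ← hπι b, h]
  set A := LinearMap.range ι with hAdef
  set B := LinearMap.ker π with hBdef
  have hAinv : ∀ g, ∀ m ∈ A, natRep F n g m ∈ A := by
    rintro g m ⟨u, rfl⟩
    exact ⟨ρ g u, hιg g u⟩
  have hBinv : ∀ g, ∀ m ∈ B, natRep F n g m ∈ B := by
    intro g m hm
    rw [LinearMap.mem_ker] at hm ⊢
    rw [hπg, hm, map_zero]
  have hABbot : ∀ m, m ∈ A → m ∈ B → m = 0 := by
    rintro m ⟨u, rfl⟩ hm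
    rw [LinearMap.mem_ker, hπι] at hm
    rw [hm, map_zero]
  have hcount : brauerDim (natRep F n) P = a0 := by
    rw [permRep_brauerDim p P hP, ← count_orbitType n P, ha0]
  have hBbot_top : B = ⊥ → A = ⊤ := by
    intro h
    rw [eq_top_iff]
    intro m _
    have h2 : m - ι (π m) ∈ B := by
      rw [LinearMap.mem_ker, map_sub, hπι, sub_self]
    rw [h, Submodule.mem_bot, sub_eq_zero] at h2
    exact ⟨π m, h2.symm⟩
  rcases invariant_lattice hn A hAinv with hAC | hSA
  · -- Case A ≤ C: ρ is the trivial module, contradicting non-domination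
    exfalso
    have htriv : ∀ g v, ρ g v = v := by
      intro g v
      apply hιinj
      rw [hιg]
      obtain ⟨c, hc⟩ := mem_CMsub_iff.mp (hAC ⟨v, rfl⟩)
      rw [← hc, map_smul, natRep_oneM]
    obtain ⟨v0, hv0⟩ := hInd.1
    set x0 : Fin n := ⟨0, by omega⟩ with hx0def
    set φ : V →ₗ[F] F := (Finsupp.lapply x0).comp ι with hφdef
    have hform : ∀ v : V, ι v = φ v • oneM F n := by
      intro v
      obtain ⟨c, hc⟩ := mem_CMsub_iff.mp (hAC ⟨v, rfl⟩)
      have hφv : φ v = c := by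
        show (ι v) x0 = c
        rw [← hc, Finsupp.smul_apply, oneM_apply, smul_eq_mul, mul_one]
      rw [hφv, hc]
    have hφ0 : φ v0 ≠ 0 := by
      intro h
      apply hv0
      apply hιinj
      rw [hform v0, h, zero_smul, map_zero]
    have hspan : ∀ v : V, v = (φ v / φ v0) • v0 := by
      intro v
      apply hιinj
      rw [map_smul, hform v, hform v0, smul_smul, div_mul_cancel₀ _ hφ0]
    apply hNotDom (muN n) (muN_partition n) (muN_strict_dominates n hn)
    set ι' : V →ₗ[F] (Tabloid n (muN n) →₀ F) := (Finsupp.lsingle (tabN n)).comp φ with hι'def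
    set π' : (Tabloid n (muN n) →₀ F) →ₗ[F] V :=
      (LinearMap.toSpanSingleton F V ((φ v0)⁻¹ • v0)).comp (Finsupp.lapply (tabN n)) with hπ'def
    refine ⟨ι', π', ?_, ?_, ?_⟩
    · intro g v
      show Finsupp.single (tabN n) (φ (ρ g v))
        = youngRep F n (muN n) g (Finsupp.single (tabN n) (φ v))
      rw [htriv g v, youngRep_single,
        show g • tabN n = tabN n from smul_tabN n g]
    · intro g w
      rw [htriv]
      show (LinearMap.toSpanSingleton F V ((φ v0)⁻¹ • v0))
          ((youngRep F n (muN n) g w) (tabN n))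
        = (LinearMap.toSpanSingleton F V ((φ v0)⁻¹ • v0)) (w (tabN n))
      congr 1
      rw [youngRep_apply,
        show g⁻¹ • tabN n = tabN n from smul_tabN n g⁻¹]
    · intro v
      show (Finsupp.single (tabN n) (φ v) (tabN n)) • ((φ v0)⁻¹ • v0) = v
      rw [Finsupp.single_apply, if_pos rfl, smul_smul, ← div_eq_mul_inv]
      exact (hspan v).symm
  · by_cases hAtop : A = ⊤
    · -- A = ⊤ : ρ is isomorphic to the whole permutation module
      have hbij : Function.Bijective ι := ⟨hιinj, LinearMap.range_eq_top.mp hAtop⟩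
      set e : V ≃ₗ[F] (Fin n →₀ F) := LinearEquiv.ofBijective ι hbij with hedef
      have heg : ∀ g v, e (ρ g v) = natRep F n g (e v) := fun g v => hιg g v
      have hiso : RepIso ρ (natRep F n) := ⟨e, heg⟩
      by_cases hpn : p ∣ n
      · have hmain : brauerDim ρ P = a0 := (RepIso.brauerDim_eq hiso P).trans hcount
        constructor
        · intro h; rw [hmain, h]
        · intro _; rw [hmain, if_pos hpn]
      · -- p ∤ n : contradiction with indecomposability
        exfalso
        have hnF : (n : F) ≠ 0 := fun h => hpn ((CharP.cast_eq_zero_iff F p n).mp h)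
        set A' := Submodule.map (e.symm : (Fin n →₀ F) →ₗ[F] V) (CMsub F n) with hA'def
        set B' := Submodule.map (e.symm : (Fin n →₀ F) →ₗ[F] V) (SMsub F n) with hB'def
        have hsymm : ∀ (g : Equiv.Perm (Fin n)) (m : Fin n →₀ F),
            ρ g (e.symm m) = e.symm (natRep F n g m) := by
          intro g m
          apply e.injective
          rw [heg, e.apply_symm_apply, e.apply_symm_apply]
        have hA'inv : ∀ g, ∀ v ∈ A', ρ g v ∈ A' := by
          rintro g v ⟨m, hm, rfl⟩
          exact ⟨natRep F n g m, CMsub_invariant g hm, (hsymm g m).symm⟩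
        have hB'inv : ∀ g, ∀ v ∈ B', ρ g v ∈ B' := by
          rintro g v ⟨m, hm, rfl⟩
          exact ⟨natRep F n g m, SMsub_invariant g hm, (hsymm g m).symm⟩
        have hinf : A' ⊓ B' = ⊥ := by
          rw [eq_bot_iff]
          rintro v ⟨⟨m1, hm1, hv1⟩, ⟨m2, hm2, hv2⟩⟩
          have hm12 : m1 = m2 := by
            apply e.symm.injective
            show e.symm m1 = e.symm m2
            rw [show ((e.symm : (Fin n →₀ F) →ₗ[F] V) m1) = e.symm m1 from rfl] at hv1
            rw [show ((e.symm : (Fin n →₀ F) →ₗ[F] V) m2) = e.symm m2 from rfl] at hv2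
            rw [hv1, hv2]
          subst hm12
          have : m1 ∈ CMsub F n ⊓ SMsub F n := ⟨hm1, hm2⟩
          rw [CMsub_inf_SMsub hnF, Submodule.mem_bot] at this
          rw [Submodule.mem_bot, ← hv1, this, map_zero]
        have hsup : A' ⊔ B' = ⊤ := by
          rw [eq_top_iff]
          intro v _
          have : e v ∈ CMsub F n ⊔ SMsub F n := by
            rw [CMsub_sup_SMsub hnF]
            exact Submodule.mem_top
          obtain ⟨c, hc, s, hs, hcs⟩ := Submodule.mem_sup.mp this
          have hv : v = e.symm c + e.symm s := by
            apply e.injective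
            rw [map_add, e.apply_symm_apply, e.apply_symm_apply, hcs]
          rw [hv]
          exact Submodule.add_mem _
            (Submodule.mem_sup_left ⟨c, hc, rfl⟩)
            (Submodule.mem_sup_right ⟨s, hs, rfl⟩)
        rcases hInd.2 A' B' hA'inv hB'inv hinf hsup with h | h
        · have : e.symm (oneM F n) ∈ A' :=
            ⟨oneM F n, Submodule.mem_span_singleton_self _, rfl⟩
          rw [h, Submodule.mem_bot] at this
          exact oneM_ne_zero (le_trans one_le_two hn) (by
            apply e.symm.injective
            rw [this, map_zero])
        · obtain ⟨m, hmS, hm0⟩ := Submodule.ne_bot_iff _ |>.mp (SMsub_ne_bot (F := F) hn)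
          have : e.symm m ∈ B' := ⟨m, hmS, rfl⟩
          rw [h, Submodule.mem_bot] at this
          exact hm0 (by
            apply e.symm.injective
            rw [this, map_zero])
    · -- A = S
      have hAS : A = SMsub F n := by
        by_contra hne
        exact hAtop (SMsub_le_eq_top hSA hne)
      rcases invariant_lattice hn B hBinv with hBC | hSB
      · by_cases hpn : p ∣ n
        · exfalso
          have hnF : (n : F) = 0 := (CharP.cast_eq_zero_iff F p n).mpr hpn
          apply hAtop
          apply hBbot_top
          rw [eq_bot_iff]
          intro m hm
          have h1 : m ∈ A := by
            rw [hAS]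
            exact CMsub_le_SMsub hnF (hBC hm)
          rw [Submodule.mem_bot]
          exact hABbot m h1 hm
        · -- p ∤ n : the main computation
          have hnF : (n : F) ≠ 0 := fun h => hpn ((CharP.cast_eq_zero_iff F p n).mp h)
          have hBne : B ≠ ⊥ := fun h => hAtop (hBbot_top h)
          have hBC' : B = CMsub F n := le_CMsub_eq hBC hBne
          have hπone : π (oneM F n) = 0 := by
            have : oneM F n ∈ B := by
              rw [hBC']
              exact Submodule.mem_span_singleton_self _
            exact LinearMap.mem_ker.mp this
          set Ψ : (Fin n →₀ F) →ₗ[F] V × F := LinearMap.prod π (augM F n) with hΨdef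
          have hΨinj : Function.Injective Ψ := by
            rw [← LinearMap.ker_eq_bot, eq_bot_iff]
            intro m hm
            rw [LinearMap.mem_ker] at hm
            have h1 : π m = 0 := congrArg Prod.fst hm
            have h2 : augM F n m = 0 := congrArg Prod.snd hm
            have hmB : m ∈ B := LinearMap.mem_ker.mpr h1
            rw [hBC'] at hmB
            obtain ⟨c, hc⟩ := mem_CMsub_iff.mp hmB
            rw [← hc, map_smul, augM_oneM, smul_eq_mul] at h2
            rcases mul_eq_zero.mp h2 with hc0 | hc0
            · rw [Submodule.mem_bot, ← hc, hc0, zero_smul]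
            · exact absurd hc0 hnF
          have hΨsurj : Function.Surjective Ψ := by
            intro x
            refine ⟨ι x.1 + ((x.2 - augM F n (ι x.1)) * (n : F)⁻¹) • oneM F n, ?_⟩
            have hfst : π (ι x.1 + ((x.2 - augM F n (ι x.1)) * (n : F)⁻¹) • oneM F n) = x.1 := by
              rw [map_add, map_smul, hπι, hπone, smul_zero, add_zero]
            have hsnd : augM F n (ι x.1 + ((x.2 - augM F n (ι x.1)) * (n : F)⁻¹) • oneM F n)
                = x.2 := by
              rw [map_add, map_smul, augM_oneM, smul_eq_mul, mul_assoc,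
                inv_mul_cancel₀ hnF, mul_one, add_sub_cancel]
            exact Prod.ext hfst hsnd
          set eΨ : (Fin n →₀ F) ≃ₗ[F] V × F := LinearEquiv.ofBijective Ψ ⟨hΨinj, hΨsurj⟩
            with heΨdef
          have heΨg : ∀ g m, eΨ (natRep F n g m)
              = prodRep ρ (1 : Representation F (Equiv.Perm (Fin n)) F) g (eΨ m) := by
            intro g m
            show (π (natRep F n g m), augM F n (natRep F n g m))
              = prodRep ρ (1 : Representation F (Equiv.Perm (Fin n)) F) g (π m, augM F n m)
            rw [prodRep_apply]
            exact Prod.ext (hπg g m) (augM_equivariant g m)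
          have hiso2 : RepIso (natRep F n)
              (prodRep ρ (1 : Representation F (Equiv.Perm (Fin n)) F)) := ⟨eΨ, heΨg⟩
          have hsum : a0 = brauerDim ρ P + 1 := by
            rw [← hcount, RepIso.brauerDim_eq hiso2 P, brauerDim_prod,
              brauerDim_triv p P hP]
          constructor
          · intro h
            omega
          · intro _
            rw [if_neg hpn]
            omega
      · -- S ≤ B : impossible
        exfalso
        apply SMsub_ne_bot (F := F) hn
        rw [eq_bot_iff]
        intro m hm
        have h1 : m ∈ A := by rw [hAS]; exact hm
        have h2 : m ∈ B := hSB hm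
        rw [Submodule.mem_bot]
        exact hABbot m h1 h2
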